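/- Let X be a Banach space and M, N closed subspaces of X. If the quotient (M+N)/N is closed in X/N, then the natural map φ : (M+N)/N → M/(M ∩ N), sending the coset (m+n) + N (with m ∈ M, n ∈ N) to m + (M ∩ N), is a well-defined bijective bounded linear operator whose inverse is also bounded. -/

import Mathlib

theorem phi_is_continuous_linear_equiv (X : Type*) [NormedAddCommGroup X] [NormedSpace ℝ X]
    [CompleteSpace X] (M N : Submodule ℝ X)
    (hM : IsClosed (M : Set X)) (hN : IsClosed (N : Set X))
    (hq : IsClosed (((M ⊔ N).map N.mkQ : Submodule ℝ (X ⧸ N)) : Set (X ⧸ N))) :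
    ∃ φ : ((M ⊔ N).map N.mkQ : Submodule ℝ (X ⧸ N)) ≃L[ℝ]
        (M.map (M ⊓ N).mkQ : Submodule ℝ (X ⧸ (M ⊓ N))),
      ∀ (m n : X) (hm : m ∈ M) (hn : n ∈ N),
        φ ⟨N.mkQ (m + n), Submodule.mem_map_of_mem (Submodule.add_mem_sup hm hn)⟩ =
          ⟨(M ⊓ N).mkQ m, Submodule.mem_map_of_mem hm⟩ := by
  set K : Submodule ℝ X := M ⊓ N with hK
  have hKc : IsClosed (K : Set X) := by
    rw [hK, Submodule.coe_inf]; exact hM.inter hN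
  haveI : IsClosed (K.toAddSubgroup : Set X) := hKc
  haveI : IsClosed (N.toAddSubgroup : Set X) := hN
  -- complete spaces
  haveI : CompleteSpace ((M ⊔ N).map N.mkQ : Submodule ℝ (X ⧸ N)) :=
    hq.completeSpace_coe
  have hqmK : Topology.IsQuotientMap (K.mkQ : X → X ⧸ K) :=
    QuotientAddGroup.isQuotientMap_mk K.toAddSubgroup
  have hqmN : Topology.IsQuotientMap (N.mkQ : X → X ⧸ N) :=
    QuotientAddGroup.isQuotientMap_mk N.toAddSubgroup
  have hMKclosed : IsClosed ((M.map K.mkQ : Submodule ℝ (X ⧸ K)) : Set (X ⧸ K)) := by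
    rw [← hqmK.isClosed_preimage]
    have : (K.mkQ : X → X ⧸ K) ⁻¹' (M.map K.mkQ : Set (X ⧸ K)) = (M : Set X) := by
      ext x
      simp only [Set.mem_preimage, SetLike.mem_coe]
      constructor
      · rintro hx
        have : x ∈ Submodule.comap K.mkQ (M.map K.mkQ) := hx
        rw [Submodule.comap_map_eq, Submodule.ker_mkQ] at this
        rwa [sup_eq_left.2 inf_le_left] at this
      · intro hx
        exact Submodule.mem_map_of_mem hx
    rw [this]; exact hM
  haveI : CompleteSpace (M.map K.mkQ : Submodule ℝ (X ⧸ K)) :=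
    hMKclosed.completeSpace_coe
  -- the lift map X⧸K → X⧸N
  let π : (X ⧸ K) →ₗ[ℝ] (X ⧸ N) := K.mapQ N LinearMap.id (fun x hx => hx.2)
  have hπmk : ∀ x : X, π (K.mkQ x) = N.mkQ x := fun x => rfl
  have hπc : Continuous π := by
    rw [hqmK.continuous_iff]
    exact hqmN.continuous
  -- restrict to the submodules
  have hmaps : ∀ y : (M.map K.mkQ : Submodule ℝ (X ⧸ K)),
      π y ∈ ((M ⊔ N).map N.mkQ : Submodule ℝ (X ⧸ N)) := by
    rintro ⟨y, hy⟩
    obtain ⟨m, hm, rfl⟩ := hy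
    exact Submodule.mem_map_of_mem (Submodule.mem_sup_left hm)
  let f : (M.map K.mkQ : Submodule ℝ (X ⧸ K)) →L[ℝ]
      ((M ⊔ N).map N.mkQ : Submodule ℝ (X ⧸ N)) :=
    { toFun := fun y => ⟨π y, hmaps y⟩
      map_add' := fun a b => by ext; simp
      map_smul' := fun c a => by ext; simp
      cont := Continuous.subtype_mk (hπc.comp continuous_subtype_val) _ }
  have hker : LinearMap.ker (f : (M.map K.mkQ : Submodule ℝ (X ⧸ K)) →ₗ[ℝ]
      ((M ⊔ N).map N.mkQ : Submodule ℝ (X ⧸ N))) = ⊥ := by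
    rw [LinearMap.ker_eq_bot']
    rintro ⟨y, hy⟩ h
    obtain ⟨m, hm, rfl⟩ := hy
    have h0 : N.mkQ m = 0 := congrArg Subtype.val h
    have hmn : m ∈ N := by rwa [Submodule.mkQ_apply, Submodule.Quotient.mk_eq_zero] at h0
    have : K.mkQ m = 0 := by
      rw [Submodule.mkQ_apply, Submodule.Quotient.mk_eq_zero]; exact ⟨hm, hmn⟩
    exact Subtype.ext this
  have hrange : LinearMap.range (f : (M.map K.mkQ : Submodule ℝ (X ⧸ K)) →ₗ[ℝ]
      ((M ⊔ N).map N.mkQ : Submodule ℝ (X ⧸ N))) = ⊤ := by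
    rw [LinearMap.range_eq_top]
    rintro ⟨z, hz⟩
    obtain ⟨x, hx, rfl⟩ := hz
    obtain ⟨m, hm, n, hn, rfl⟩ := Submodule.mem_sup.1 hx
    refine ⟨⟨K.mkQ m, Submodule.mem_map_of_mem hm⟩, ?_⟩
    apply Subtype.ext
    show π (K.mkQ m) = N.mkQ (m + n)
    rw [hπmk]
    simp only [Submodule.mkQ_apply]
    rw [Submodule.Quotient.eq]
    simpa using neg_mem hn
  let e := ContinuousLinearEquiv.ofBijective f hker hrange
  refine ⟨e.symm, fun m n hm hn => ?_⟩
  have he : e ⟨K.mkQ m, Submodule.mem_map_of_mem hm⟩ =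
      ⟨N.mkQ (m + n), Submodule.mem_map_of_mem (Submodule.add_mem_sup hm hn)⟩ := by
    apply Subtype.ext
    show π (K.mkQ m) = N.mkQ (m + n)
    rw [hπmk]
    simp only [Submodule.mkQ_apply]
    rw [Submodule.Quotient.eq]
    simpa using neg_mem hn
  rw [← he, ContinuousLinearEquiv.symm_apply_apply]
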